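/- Let A ∈ ℝ^{m×n} and q < m/2 an integer. Then the orthogonal complement of the subspace R = ⋂_{T ⊆ [m], |T| = m−2q} rowspan(A_T) equals the span of the ambiguity set S_q^A = {v : ‖Av‖₀ ≤ 2q}. -/

import Mathlib

open Matrix Finset

noncomputable section

/-- ℓ₀ "norm": the number of nonzero coordinates. -/
def l0 {m : ℕ} (w : Fin m → ℝ) : ℕ := (Finset.univ.filter fun i => w i ≠ 0).card

/-- The row span of the submatrix `A_T` (rows of `A` indexed by `T`), viewed inside
Euclidean space so that orthogonal complements are available. -/
def rowspanE {m n : ℕ} (A : Matrix (Fin m) (Fin n) ℝ) (T : Finset (Fin m)) :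
    Submodule ℝ (EuclideanSpace ℝ (Fin n)) :=
  Submodule.span ℝ {w : EuclideanSpace ℝ (Fin n) | ∃ i ∈ T, w = A i}

lemma inner_row {m n : ℕ} (A : Matrix (Fin m) (Fin n) ℝ) (v : EuclideanSpace ℝ (Fin n))
    (i : Fin m) :
    (inner (𝕜 := ℝ) (WithLp.toLp 2 (A i)) v) = A.mulVec v i := by
  simp [PiLp.inner_apply, Matrix.mulVec, dotProduct, RCLike.inner_apply, mul_comm]

lemma mem_orth_rowspan {m n : ℕ} (A : Matrix (Fin m) (Fin n) ℝ) (T : Finset (Fin m))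
    (v : EuclideanSpace ℝ (Fin n)) :
    v ∈ (rowspanE A T)ᗮ ↔ ∀ i ∈ T, A.mulVec v i = 0 := by
  constructor
  · intro hv i hi
    rw [← inner_row]
    exact (Submodule.mem_orthogonal _ _).1 hv _ (Submodule.subset_span ⟨i, hi, rfl⟩)
  · intro h
    rw [Submodule.mem_orthogonal]
    intro u hu
    refine Submodule.span_induction ?_ ?_ ?_ ?_ hu
    · rintro w ⟨i, hi, hw⟩
      obtain rfl : w = WithLp.toLp 2 (A i) := by rw [← hw, WithLp.toLp_ofLp]
      exact (inner_row A v i).trans (h i hi)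
    · simp
    · intro x y _ _ hx hy; rw [inner_add_left, hx, hy, add_zero]
    · intro a x _ hx; rw [inner_smul_left, hx, mul_zero]

theorem stmt5 {m n : ℕ} (A : Matrix (Fin m) (Fin n) ℝ) (q : ℕ) (hq : 2 * q < m) :
    (⨅ T ∈ {T : Finset (Fin m) | T.card = m - 2 * q}, rowspanE A T)ᗮ =
      Submodule.span ℝ {v : EuclideanSpace ℝ (Fin n) | l0 (A.mulVec v) ≤ 2 * q} := by
  have hcu : (Finset.univ : Finset (Fin m)).card = m := by simp
  -- each kernel (rowspanE A T)ᗮ with T.card = m - 2q consists of elements of S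
  have hker : ∀ T : Finset (Fin m), T.card = m - 2 * q →
      ∀ v ∈ (rowspanE A T)ᗮ, l0 (A.mulVec v) ≤ 2 * q := by
    intro T hT v hv
    have h0 := (mem_orth_rowspan A T v).1 hv
    have hsub : T ⊆ Finset.univ.filter fun i => A.mulVec v i = 0 := by
      intro i hi; simp [h0 i hi]
    have hcard := Finset.card_le_card hsub
    have hsum := Finset.card_filter_add_card_filter_not
      (s := (Finset.univ : Finset (Fin m))) (p := fun i => A.mulVec v i = 0)
    have hne : (Finset.univ.filter fun i => ¬ A.mulVec v i = 0).card =
        (Finset.univ.filter fun i => A.mulVec v i ≠ 0).card := rfl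
    unfold l0
    omega
  apply le_antisymm
  · -- Rᗮ ≤ span S, by showing (span S)ᗮ ≤ R
    have h1 : (Submodule.span ℝ
        {v : EuclideanSpace ℝ (Fin n) | l0 (A.mulVec v) ≤ 2 * q})ᗮ ≤
        ⨅ T ∈ {T : Finset (Fin m) | T.card = m - 2 * q}, rowspanE A T := by
      intro u hu
      simp only [Submodule.mem_iInf]
      intro T hT
      rw [← Submodule.orthogonal_orthogonal (rowspanE A T), Submodule.mem_orthogonal]
      intro w hw
      exact (Submodule.mem_orthogonal _ _).1 hu w
        (Submodule.subset_span (hker T hT w hw))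
    calc (⨅ T ∈ {T : Finset (Fin m) | T.card = m - 2 * q}, rowspanE A T)ᗮ
        ≤ ((Submodule.span ℝ
          {v : EuclideanSpace ℝ (Fin n) | l0 (A.mulVec v) ≤ 2 * q})ᗮ)ᗮ :=
          Submodule.orthogonal_le h1
      _ = _ := Submodule.orthogonal_orthogonal _
  · -- span S ≤ Rᗮ
    rw [Submodule.span_le]
    intro v hv
    have hzero : m - 2 * q ≤ (Finset.univ.filter fun i => A.mulVec v i = 0).card := by
      have hsum := Finset.card_filter_add_card_filter_not
        (s := (Finset.univ : Finset (Fin m))) (p := fun i => A.mulVec v i = 0)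
      have hne : (Finset.univ.filter fun i => ¬ A.mulVec v i = 0).card =
          (Finset.univ.filter fun i => A.mulVec v i ≠ 0).card := rfl
      have hl0 : l0 (A.mulVec v) ≤ 2 * q := hv
      unfold l0 at hl0
      omega
    obtain ⟨T, hTsub, hTcard⟩ := Finset.exists_subset_card_eq hzero
    rw [SetLike.mem_coe, Submodule.mem_orthogonal]
    intro u hu
    have hvT : v ∈ (rowspanE A T)ᗮ := by
      rw [mem_orth_rowspan]
      intro i hi
      simpa using hTsub hi
    have huT : u ∈ rowspanE A T := by
      have := Submodule.mem_iInf (fun T => ⨅ _ : T ∈ {T : Finset (Fin m) | T.card = m - 2 * q}, rowspanE A T) |>.1 hu T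
      exact (Submodule.mem_iInf _).1 this hTcard
    exact ((Submodule.mem_orthogonal _ _).1 hvT u huT)
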